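/- Let f be a monic complex polynomial of degree d ≥ 2 with M = max(1, |a_{d-1}|, ..., |a_0|) and R = max(2, M). Then for all z with |z| ≥ R, |f(z)| ≤ (|z| + R)^d − R, and by induction |f^n(z)| ≤ (|z| + R)^{d^n} − R for all n ≥ 1; consequently the escape-rate function satisfies G_f(z) ≤ log(max(|z|, R) + R) for all z ∈ ℂ, and max_{|w|=1} G_f(w) ≤ (1/d)·log M + 1. -/

import Mathlib

open Filter

/-- growth bounds for a monic complex polynomial and the resulting
bounds on the escape-rate function, including on the unit circle. -/
theorem stmt18 (d : ℕ) (hd : 2 ≤ d) (a : ℕ → ℂ) (f : ℂ → ℂ)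
    (hf : ∀ z, f z = z ^ d + ∑ i ∈ Finset.range d, a i * z ^ i)
    (M R : ℝ)
    (hM : M = (Finset.range d).sup' (Finset.nonempty_range_iff.mpr (by omega))
      (fun i => max 1 (‖a i‖)))
    (hR : R = max 2 M)
    (G : ℂ → ℝ)
    (hG : ∀ z : ℂ, Tendsto
      (fun n : ℕ => ((d : ℝ) ^ n)⁻¹ * Real.log (max 1 (‖f^[n] z‖)))
      atTop (nhds (G z))) :
    (∀ z : ℂ, R ≤ ‖z‖ →
      ‖f z‖ ≤ (‖z‖ + R) ^ d - R) ∧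
    (∀ z : ℂ, R ≤ ‖z‖ → ∀ n : ℕ, 1 ≤ n →
      ‖f^[n] z‖ ≤ (‖z‖ + R) ^ (d ^ n) - R) ∧
    (∀ z : ℂ, G z ≤ Real.log (max (‖z‖) R + R)) ∧
    (∀ w : ℂ, ‖w‖ = 1 → G w ≤ (1 / d) * Real.log M + 1) := by
  have hd0 : 0 < d := by omega
  have hM1 : (1:ℝ) ≤ M := by
    rw [hM]
    exact le_trans (le_max_left 1 _)
      (Finset.le_sup' (fun i => max 1 (‖a i‖)) (Finset.mem_range.mpr hd0))
  have haM : ∀ i, i < d → ‖a i‖ ≤ M := by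
    intro i hi
    rw [hM]
    exact le_trans (le_max_right 1 _)
      (Finset.le_sup' (fun i => max 1 (‖a i‖)) (Finset.mem_range.mpr hi))
  have hR2 : (2:ℝ) ≤ R := by rw [hR]; exact le_max_left _ _
  have hMR : M ≤ R := by rw [hR]; exact le_max_right _ _
  have hR1 : (1:ℝ) ≤ R := by linarith
  have hR0 : (0:ℝ) < R := by linarith
  -- basic sum bound
  have key : ∀ (z : ℂ) (x : ℝ), ‖z‖ ≤ x → 1 ≤ x →
      ‖f z‖ ≤ x ^ d + d * M * x ^ (d - 1) := by
    intro z x hzx hx1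
    have hx0 : (0:ℝ) ≤ x := by linarith
    rw [hf]
    calc ‖z ^ d + ∑ i ∈ Finset.range d, a i * z ^ i‖
        ≤ ‖z ^ d‖ + ‖∑ i ∈ Finset.range d, a i * z ^ i‖ :=
          norm_add_le _ _
      _ ≤ x ^ d + ∑ i ∈ Finset.range d, ‖a i * z ^ i‖ := by
          gcongr
          · rw [norm_pow]
            exact pow_le_pow_left₀ (norm_nonneg z) hzx d
          · exact norm_sum_le _ _
      _ ≤ x ^ d + ∑ _i ∈ Finset.range d, M * x ^ (d - 1) := by
          gcongr x ^ d + ?_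
          apply Finset.sum_le_sum
          intro i hi
          rw [norm_mul, norm_pow]
          have h1 : ‖a i‖ ≤ M := haM i (Finset.mem_range.mp hi)
          have h2 : ‖z‖ ^ i ≤ x ^ (d - 1) := by
            calc ‖z‖ ^ i ≤ x ^ i :=
                  pow_le_pow_left₀ (norm_nonneg z) hzx i
              _ ≤ x ^ (d - 1) := pow_le_pow_right₀ hx1 (by
                  have := Finset.mem_range.mp hi; omega)
          exact mul_le_mul h1 h2 (by positivity) (by linarith)
      _ = x ^ d + d * M * x ^ (d - 1) := by
          rw [Finset.sum_const, Finset.card_range]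
          push_cast; ring
  -- binomial lower bound
  have binom : ∀ x : ℝ, R ≤ x → x ^ d + d * R * x ^ (d - 1) + R ≤ (x + R) ^ d := by
    intro x hRx
    have hx0 : (0:ℝ) < x := by linarith
    rw [add_pow]
    have hsub : ({0, d - 1, d} : Finset ℕ) ⊆ Finset.range (d + 1) := by
      intro k hk
      simp only [Finset.mem_insert, Finset.mem_singleton] at hk
      rw [Finset.mem_range]; omega
    have hle : ∑ k ∈ ({0, d - 1, d} : Finset ℕ),
        x ^ k * R ^ (d - k) * (d.choose k : ℝ) ≤
        ∑ k ∈ Finset.range (d + 1), x ^ k * R ^ (d - k) * (d.choose k : ℝ) :=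
      Finset.sum_le_sum_of_subset_of_nonneg hsub (fun k _ _ => by positivity)
    have hch : d.choose (d - 1) = d := by
      rw [Nat.choose_symm (by omega : 1 ≤ d), Nat.choose_one_right]
    have hcalc : ∑ k ∈ ({0, d - 1, d} : Finset ℕ),
        x ^ k * R ^ (d - k) * (d.choose k : ℝ) =
        R ^ d + d * R * x ^ (d - 1) + x ^ d := by
      rw [Finset.sum_insert (by simp only [Finset.mem_insert, Finset.mem_singleton]; omega),
        Finset.sum_insert (by simp only [Finset.mem_singleton]; omega),
        Finset.sum_singleton]
      rw [Nat.choose_self, Nat.choose_zero_right, hch,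
        Nat.sub_self, Nat.sub_sub_self (by omega : 1 ≤ d), Nat.sub_zero]
      push_cast; ring
    have hRd : R ≤ R ^ d := le_self_pow₀ hR1 (by omega)
    rw [hcalc] at hle
    linarith
  -- part 1 (in general form)
  have A : ∀ (z : ℂ) (x : ℝ), ‖z‖ ≤ x → R ≤ x →
      ‖f z‖ ≤ (x + R) ^ d - R := by
    intro z x hzx hRx
    have h1 := key z x hzx (by linarith)
    have h2 := binom x hRx
    have h3 : (d:ℝ) * M * x ^ (d - 1) ≤ (d:ℝ) * R * x ^ (d - 1) :=
      mul_le_mul_of_nonneg_right (mul_le_mul_of_nonneg_left hMR (Nat.cast_nonneg d))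
        (pow_nonneg (by linarith) _)
    linarith
  -- part 2 (in general form)
  have B : ∀ (x : ℝ), R ≤ x → ∀ (z : ℂ), ‖z‖ ≤ x → ∀ n : ℕ, 1 ≤ n →
      ‖f^[n] z‖ ≤ (x + R) ^ (d ^ n) - R := by
    intro x hRx z hzx n hn
    induction n with
    | zero => omega
    | succ n ih =>
      rcases Nat.lt_or_ge 1 (n + 1) with h1 | h1
      · have hn1 : 1 ≤ n := by omega
        have ih' := ih hn1
        rw [Function.iterate_succ_apply']
        have hy1 : (2:ℝ) * R ≤ (x + R) ^ (d ^ n) := by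
          calc (2:ℝ) * R ≤ x + R := by linarith
            _ = (x + R) ^ 1 := (pow_one _).symm
            _ ≤ (x + R) ^ (d ^ n) := pow_le_pow_right₀ (by linarith)
                (Nat.one_le_pow n d hd0)
        have hR' : R ≤ (x + R) ^ (d ^ n) - R := by linarith
        have := A (f^[n] z) ((x + R) ^ (d ^ n) - R) ih' hR'
        calc ‖f (f^[n] z)‖ ≤ ((x + R) ^ (d ^ n) - R + R) ^ d - R := this
          _ = (x + R) ^ (d ^ (n + 1)) - R := by
              rw [sub_add_cancel, ← pow_mul, ← pow_succ]
      · have : n = 0 := by omega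
        subst this
        simpa [pow_one] using A z x hzx hRx
  -- part 3
  have part3 : ∀ z : ℂ, G z ≤ Real.log (max (‖z‖) R + R) := by
    intro z
    set x := max (‖z‖) R with hx
    have hRx : R ≤ x := le_max_right _ _
    have hzx : ‖z‖ ≤ x := le_max_left _ _
    have hxR1 : (1:ℝ) ≤ x + R := by linarith
    refine le_of_tendsto (hG z) ?_
    filter_upwards [eventually_ge_atTop 1] with n hn
    have hb := B x hRx z hzx n hn
    have h1 : max 1 (‖f^[n] z‖) ≤ (x + R) ^ (d ^ n) := by
      apply max_le
      · exact one_le_pow₀ hxR1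
      · linarith
    have hlog : Real.log (max 1 (‖f^[n] z‖)) ≤
        (d : ℝ) ^ n * Real.log (x + R) := by
      calc Real.log (max 1 (‖f^[n] z‖))
          ≤ Real.log ((x + R) ^ (d ^ n)) :=
            Real.log_le_log (by positivity) h1
        _ = (d : ℝ) ^ n * Real.log (x + R) := by
            rw [Real.log_pow]; push_cast; ring
    have hdn : (0:ℝ) < (d:ℝ) ^ n := by positivity
    calc ((d:ℝ) ^ n)⁻¹ * Real.log (max 1 (‖f^[n] z‖))
        ≤ ((d:ℝ) ^ n)⁻¹ * ((d:ℝ) ^ n * Real.log (x + R)) := by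
          apply mul_le_mul_of_nonneg_left hlog (by positivity)
      _ = Real.log (x + R) := by field_simp
  refine ⟨fun z hz => A z _ le_rfl hz, fun z hz n hn => B _ hz z le_rfl n hn, part3, ?_⟩
  -- part 4
  intro w hw
  have hdR : (0:ℝ) < (d:ℝ) := by positivity
  have hd2 : (2:ℝ) ≤ (d:ℝ) := by exact_mod_cast hd
  have hfw : ‖f w‖ ≤ 1 + d * M := by
    have := key w 1 (le_of_eq hw) le_rfl
    simpa using this
  -- functional equation
  have hfe : G (f w) = d * G w := by
    have h3 : Tendsto (fun n : ℕ => ((d:ℝ) ^ (n + 1))⁻¹ *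
        Real.log (max 1 (‖f^[n + 1] w‖))) atTop (nhds (G w)) :=
      (hG w).comp (tendsto_add_atTop_nat 1)
    have h4 := h3.const_mul (d:ℝ)
    have heq : (fun n : ℕ => ((d:ℝ) ^ n)⁻¹ *
        Real.log (max 1 (‖f^[n] (f w)‖))) =
        fun n : ℕ => (d:ℝ) * (((d:ℝ) ^ (n + 1))⁻¹ *
        Real.log (max 1 (‖f^[n + 1] w‖))) := by
      funext n
      rw [← Function.iterate_succ_apply, pow_succ]
      have hdne : (d:ℝ) ≠ 0 := by positivity
      field_simp
    have h2 : Tendsto (fun n : ℕ => ((d:ℝ) ^ n)⁻¹ *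
        Real.log (max 1 (‖f^[n] (f w)‖))) atTop (nhds ((d:ℝ) * G w)) := by
      rw [heq]; exact h4
    exact tendsto_nhds_unique (hG (f w)) h2
  have hb := part3 (f w)
  have h5 : max (‖f w‖) R + R ≤ ((d:ℝ) + 3) * M := by
    have hRle : R ≤ 1 + d * M := by
      rw [hR]
      apply max_le <;> nlinarith
    have hmax : max (‖f w‖) R ≤ 1 + d * M := max_le hfw hRle
    have hR2M : R ≤ 2 * M := by rw [hR]; apply max_le <;> nlinarith
    nlinarith
  have hpos : (0:ℝ) < max (‖f w‖) R + R := by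
    have : R ≤ max (‖f w‖) R := le_max_right _ _
    linarith
  have h6 : Real.log (max (‖f w‖) R + R) ≤ Real.log (((d:ℝ) + 3) * M) :=
    Real.log_le_log hpos h5
  have h7 : Real.log (((d:ℝ) + 3) * M) = Real.log ((d:ℝ) + 3) + Real.log M :=
    Real.log_mul (by linarith) (by linarith)
  have h8 : Real.log ((d:ℝ) + 3) ≤ (d:ℝ) := by
    rw [Real.log_le_iff_le_exp (by linarith)]
    have e2 : (7:ℝ) ≤ Real.exp 2 := by
      have h : Real.exp 2 = Real.exp 1 * Real.exp 1 := by
        rw [← Real.exp_add]; norm_num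
      nlinarith [Real.exp_one_gt_d9]
    have e3 : (d:ℝ) - 2 + 1 ≤ Real.exp ((d:ℝ) - 2) := Real.add_one_le_exp _
    have e4 : Real.exp (d:ℝ) = Real.exp 2 * Real.exp ((d:ℝ) - 2) := by
      rw [← Real.exp_add]; ring_nf
    nlinarith [Real.exp_pos ((d:ℝ) - 2)]
  have hG4 : G (f w) ≤ Real.log M + (d:ℝ) := by
    rw [h7] at h6
    linarith
  have hthis : (d:ℝ) * G w ≤ Real.log M + (d:ℝ) := hfe ▸ hG4
  rw [show (1 / (d:ℝ)) * Real.log M + 1 = (Real.log M + (d:ℝ)) / (d:ℝ) by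
    field_simp]
  rw [le_div_iff₀ hdR]
  linarith
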